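/- Fix r ≥ 2. The core-quotient decomposition λ ↦ (core_r(λ), quot_r(λ)) is a bijection from the set of all partitions onto the product of the set of r-core partitions with the set of r-tuples of partitions. -/

import Mathlib

/-- Two cells are (edge-)adjacent. -/
def Adj (a b : ℕ × ℕ) : Prop :=
  (a.1 = b.1 ∧ (a.2 + 1 = b.2 ∨ b.2 + 1 = a.2)) ∨
  (a.2 = b.2 ∧ (a.1 + 1 = b.1 ∨ b.1 + 1 = a.1))

/-- A set of cells is connected (any two cells are joined by a path of
edge-adjacent cells inside the set). -/
def ConnectedCells (s : Set (ℕ × ℕ)) : Prop :=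
  ∀ x ∈ s, ∀ y ∈ s, Relation.ReflTransGen (fun a b => Adj a b ∧ a ∈ s ∧ b ∈ s) x y

/-- `ν` is obtained from `μ` by removing a ribbon (rim hook) of length `r`:
the skew shape `μ/ν` has `r` cells, is connected, and contains no 2×2 square. -/
def IsRibbonOf (r : ℕ) (μ ν : YoungDiagram) : Prop :=
  ν.cells ⊆ μ.cells ∧ (μ.cells \ ν.cells).card = r ∧
  ConnectedCells ((μ.cells : Set (ℕ × ℕ)) \ (ν.cells : Set (ℕ × ℕ))) ∧
  ∀ i j : ℕ, ¬ ((i, j) ∈ μ.cells \ ν.cells ∧ (i + 1, j) ∈ μ.cells \ ν.cells ∧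
      (i, j + 1) ∈ μ.cells \ ν.cells ∧ (i + 1, j + 1) ∈ μ.cells \ ν.cells)

/-- An `r`-core is a partition with no removable ribbon of length `r`. -/
def IsRCore (r : ℕ) (μ : YoungDiagram) : Prop := ∀ ν, ¬ IsRibbonOf r μ ν

/-- The beta-set of a partition. -/
def betaSet (μ : YoungDiagram) : Set ℤ :=
  {n | ∃ i : ℕ, n = (μ.rowLen i : ℤ) - (i + 1)}

/-- `ν` is the `r`-core of `μ`: it is reached from `μ` by successively
removing `r`-ribbons, and has no `r`-ribbon left. -/
def ReachesCore (r : ℕ) (μ ν : YoungDiagram) : Prop :=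
  Relation.ReflTransGen (fun a b => IsRibbonOf r a b) μ ν ∧ IsRCore r ν

/-- The total size `|quot_r(μ)|` of the `r`-quotient of `μ`, read off from the
Maya diagram: it is the number of pairs `(s, t)` with `s` in the beta-set,
`t` not in the beta-set, `t < s` and `s ≡ t (mod r)`. -/
noncomputable def quotTotal (r : ℕ) (μ : YoungDiagram) : ℕ :=
  {p : ℤ × ℤ | p.1 ∈ betaSet μ ∧ p.2 ∉ betaSet μ ∧ p.2 < p.1 ∧
    (r : ℤ) ∣ (p.1 - p.2)}.ncard

/-- The charge of the residue-`i` subdiagram of the Maya diagram with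
black-bead set `S`: the number of black beads at positions `i + kr`, `k ≥ 0`,
minus the number of white beads at positions `i + kr`, `k < 0`. -/
noncomputable def charge (r : ℕ) (S : Set ℤ) (i : ℤ) : ℤ :=
  ({k : ℕ | i + (k : ℤ) * r ∈ S}.ncard : ℤ) -
    ({k : ℕ | i - ((k : ℤ) + 1) * r ∉ S}.ncard : ℤ)

/-- `v` is the `r`-quotient of `μ`: the beta-set of the `i`-th component is the
residue-`i` subdiagram of the Maya diagram of `μ`, recentered by its charge. -/
def QuotRel (r : ℕ) (μ : YoungDiagram) (v : Fin r → YoungDiagram) : Prop :=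
  ∀ i : Fin r,
    betaSet (v i) =
      {n : ℤ | (i : ℤ) + (n + charge r (betaSet μ) i) * r ∈ betaSet μ}

namespace CQ


noncomputable def beta (μ : YoungDiagram) (i : ℕ) : ℤ := (μ.rowLen i : ℤ) - (i + 1)

lemma betaSet_eq_range (μ : YoungDiagram) : betaSet μ = Set.range (beta μ) := by
  ext n; simp [betaSet, beta, Set.range, eq_comm]

lemma beta_strictAnti (μ : YoungDiagram) : StrictAnti (beta μ) := by
  apply strictAnti_nat_of_succ_lt
  intro i
  have h := μ.rowLen_anti i (i+1) (by omega)
  simp only [beta]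
  push_cast
  omega

lemma exists_rowLen_zero (μ : YoungDiagram) : ∃ N : ℕ, ∀ i, N ≤ i → μ.rowLen i = 0 := by
  refine ⟨μ.colLen 0, fun i hi => ?_⟩
  by_contra h
  have h1 : (i, 0) ∈ μ := YoungDiagram.mem_iff_lt_rowLen.2 (by omega)
  have := YoungDiagram.mem_iff_lt_colLen.1 h1
  omega

/-- two strictly antitone sequences with the same range are equal -/
lemma strictAnti_range_eq {g h : ℕ → ℤ} (hg : StrictAnti g) (hh : StrictAnti h)
    (hr : Set.range g = Set.range h) : g = h := by
  funext n
  induction n using Nat.strong_induction_on with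
  | _ n ih =>
    obtain ⟨m, hm⟩ : g n ∈ Set.range h := hr ▸ Set.mem_range_self n
    obtain ⟨m', hm'⟩ : h n ∈ Set.range g := hr.symm ▸ Set.mem_range_self n
    have hge : h n ≤ g n := by
      rcases lt_or_ge m' n with hc | hc
      · exfalso
        have e1 : g m' = h m' := ih m' hc
        have : h m' = h n := e1 ▸ hm'
        have := hh.injective this
        omega
      · calc h n = g m' := hm'.symm
          _ ≤ g n := hg.antitone hc
    have hle : g n ≤ h n := by
      rcases lt_or_ge m n with hc | hc
      · exfalso
        have e1 : g m = h m := ih m hc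
        have : g m = g n := e1.symm ▸ hm
        have := hg.injective this
        omega
      · calc g n = h m := hm.symm
          _ ≤ h n := hh.antitone hc
    omega

lemma beta_eq_of_betaSet_eq {μ ν : YoungDiagram} (h : betaSet μ = betaSet ν) :
    beta μ = beta ν := by
  apply strictAnti_range_eq (beta_strictAnti μ) (beta_strictAnti ν)
  rw [← betaSet_eq_range, ← betaSet_eq_range, h]

lemma rowLen_eq_of_beta {μ ν : YoungDiagram} (h : beta μ = beta ν) (i : ℕ) :
    μ.rowLen i = ν.rowLen i := by
  have := congrFun h i
  simp only [beta] at this; omega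

lemma betaSet_injective : Function.Injective betaSet := by
  intro μ ν h
  have hb := beta_eq_of_betaSet_eq h
  ext ⟨i, j⟩
  simp only [YoungDiagram.mem_cells, YoungDiagram.mem_iff_lt_rowLen,
    rowLen_eq_of_beta hb i]

/-- Construct a Young diagram from an antitone, eventually-zero row-length function. -/
def ofFn (f : ℕ → ℕ) (hf : ∀ i j : ℕ, i ≤ j → f j ≤ f i) (N : ℕ)
    (hN : ∀ i, N ≤ i → f i = 0) : YoungDiagram where
  cells := (Finset.range N ×ˢ Finset.range (f 0 + 1)).filter fun c => c.2 < f c.1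
  isLowerSet := by
    rintro ⟨i2, j2⟩ ⟨i1, j1⟩ ⟨hi, hj⟩ hm
    simp only [Finset.coe_filter, Finset.mem_product, Finset.mem_range, Set.mem_setOf_eq] at hm ⊢
    simp only at hi hj
    obtain ⟨⟨hiN, hj0⟩, hjf⟩ := hm
    have h1 : f i2 ≤ f i1 := hf i1 i2 hi
    have h2 : f i1 ≤ f 0 := hf 0 i1 (Nat.zero_le _)
    have h3 : f i2 ≤ f 0 := hf 0 i2 (Nat.zero_le _)
    refine ⟨⟨?_, by omega⟩, by omega⟩
    by_contra hc
    have := hN i1 (by omega)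
    omega

lemma mem_ofFn (f : ℕ → ℕ) (hf) (N : ℕ) (hN) (i j : ℕ) :
    (i, j) ∈ ofFn f hf N hN ↔ j < f i := by
  show (i,j) ∈ Finset.filter _ _ ↔ _
  simp only [Finset.mem_filter, Finset.mem_product, Finset.mem_range]
  constructor
  · tauto
  · intro h
    have h2 : f i ≤ f 0 := hf 0 i (Nat.zero_le _)
    refine ⟨⟨?_, by omega⟩, h⟩
    by_contra hc
    have := hN i (by omega)
    omega

lemma rowLen_ofFn (f : ℕ → ℕ) (hf) (N : ℕ) (hN) (i : ℕ) :
    (ofFn f hf N hN).rowLen i = f i := by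
  have h1 := @YoungDiagram.mem_iff_lt_rowLen (ofFn f hf N hN)
  rcases Nat.lt_trichotomy ((ofFn f hf N hN).rowLen i) (f i) with h | h | h
  · have := (mem_ofFn f hf N hN i _).2 h
    rw [h1] at this; omega
  · exact h
  · have h2 : (i, f i) ∈ ofFn f hf N hN := h1.2 h
    rw [mem_ofFn] at h2; omega



/-- A "Maya" set: bounded above and cofinite below. -/
def Maya (S : Set ℤ) : Prop := (∃ b, ∀ x ∈ S, x ≤ b) ∧ (∃ M, ∀ n ≤ M, n ∈ S)

lemma Maya.finite_inter_Ici {S : Set ℤ} (h : Maya S) (c : ℤ) : (S ∩ Set.Ici c).Finite := by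
  obtain ⟨⟨b, hb⟩, -⟩ := h
  apply (Set.finite_Icc c b).subset
  rintro x ⟨hx1, hx2⟩
  exact ⟨hx2, hb x hx1⟩

lemma Maya.finite_diff_Iio {S : Set ℤ} (h : Maya S) (c : ℤ) : (Set.Iio c \ S).Finite := by
  obtain ⟨-, M, hM⟩ := h
  apply (Set.finite_Icc M c).subset
  rintro x ⟨hx1, hx2⟩
  refine ⟨?_, le_of_lt hx1⟩
  by_contra hc
  exact hx2 (hM x (by omega))

/-- charge relative to cutoff `c`. -/
noncomputable def chAt (S : Set ℤ) (c : ℤ) : ℤ :=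
  ((S ∩ Set.Ici c).ncard : ℤ) - ((Set.Iio c \ S).ncard : ℤ)

noncomputable def ch (S : Set ℤ) : ℤ := chAt S 0

lemma chAt_succ {S : Set ℤ} (h : Maya S) (c : ℤ) : chAt S (c + 1) = chAt S c - 1 := by
  by_cases hc : c ∈ S
  · have e1 : S ∩ Set.Ici c = insert c (S ∩ Set.Ici (c + 1)) := by
      ext x
      simp only [Set.mem_inter_iff, Set.mem_Ici, Set.mem_insert_iff]
      constructor
      · rintro ⟨h1, h2⟩
        rcases eq_or_lt_of_le h2 with h3 | h3
        · exact Or.inl h3.symm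
        · exact Or.inr ⟨h1, by omega⟩
      · rintro (rfl | ⟨h1, h2⟩)
        · exact ⟨hc, le_refl _⟩
        · exact ⟨h1, by omega⟩
    have e2 : Set.Iio (c + 1) \ S = Set.Iio c \ S := by
      ext x
      simp only [Set.mem_diff, Set.mem_Iio]
      constructor
      · rintro ⟨h1, h2⟩
        refine ⟨?_, h2⟩
        rcases eq_or_lt_of_le (by omega : x ≤ c) with h3 | h3
        · exact absurd (h3 ▸ hc) h2
        · exact h3
      · rintro ⟨h1, h2⟩; exact ⟨by omega, h2⟩
    have hfin : (S ∩ Set.Ici (c + 1)).Finite := h.finite_inter_Ici _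
    have hnotmem : c ∉ S ∩ Set.Ici (c + 1) := by
      rintro ⟨-, h2⟩; simp only [Set.mem_Ici] at h2; omega
    rw [chAt, chAt, e1, e2, Set.ncard_insert_of_notMem hnotmem hfin]
    push_cast
    ring
  · have e1 : S ∩ Set.Ici c = S ∩ Set.Ici (c + 1) := by
      ext x
      simp only [Set.mem_inter_iff, Set.mem_Ici]
      constructor
      · rintro ⟨h1, h2⟩
        refine ⟨h1, ?_⟩
        rcases eq_or_lt_of_le h2 with h3 | h3
        · exact absurd (h3 ▸ h1) hc
        · omega
      · rintro ⟨h1, h2⟩; exact ⟨h1, by omega⟩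
    have e2 : Set.Iio (c + 1) \ S = insert c (Set.Iio c \ S) := by
      ext x
      simp only [Set.mem_diff, Set.mem_Iio, Set.mem_insert_iff]
      constructor
      · rintro ⟨h1, h2⟩
        rcases eq_or_lt_of_le (by omega : x ≤ c) with h3 | h3
        · exact Or.inl h3
        · exact Or.inr ⟨h3, h2⟩
      · rintro (rfl | ⟨h1, h2⟩)
        · exact ⟨by omega, hc⟩
        · exact ⟨by omega, h2⟩
    have hfin : (Set.Iio c \ S).Finite := h.finite_diff_Iio _
    have hnotmem : c ∉ Set.Iio c \ S := by
      rintro ⟨h1, -⟩; simp at h1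
    rw [chAt, chAt, e1, e2, Set.ncard_insert_of_notMem hnotmem hfin]
    push_cast
    ring

lemma chAt_eq {S : Set ℤ} (h : Maya S) (c : ℤ) : chAt S c = ch S - c := by
  induction c using Int.induction_on with
  | zero => simp [ch]
  | succ k ih => rw [chAt_succ h, ih]; ring
  | pred k ih =>
      have h2 := chAt_succ h (-(k:ℤ) - 1)
      rw [show (-(k:ℤ) - 1 + 1) = -(k:ℤ) by ring, ih] at h2
      omega

/-- moving a bead from `s` down to `t` preserves the charge. -/
lemma ch_move {S : Set ℤ} (h : Maya S) {s t : ℤ} (hts : t < s) (hs : s ∈ S) (ht : t ∉ S) :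
    ch (insert t (S \ {s})) = ch S := by
  set T := insert t (S \ {s}) with hT
  have hMT : Maya T := by
    obtain ⟨⟨b, hb⟩, M, hM⟩ := h
    refine ⟨⟨max b t, ?_⟩, ⟨min M (t - 1), ?_⟩⟩
    · rintro x (rfl | ⟨h1, -⟩)
      · exact le_max_right _ _
      · exact le_trans (hb x h1) (le_max_left _ _)
    · intro n hn
      right
      constructor
      · exact hM n (by omega)
      · simp only [Set.mem_singleton_iff]; omega
  have e1 : T ∩ Set.Ici t = insert t ((S ∩ Set.Ici t) \ {s}) := by
    ext x
    simp only [hT, Set.mem_inter_iff, Set.mem_insert_iff, Set.mem_diff, Set.mem_Ici,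
      Set.mem_singleton_iff]
    constructor
    · rintro ⟨rfl | ⟨h1, h2⟩, h3⟩
      · exact Or.inl rfl
      · exact Or.inr ⟨⟨h1, h3⟩, h2⟩
    · rintro (rfl | ⟨⟨h1, h2⟩, h3⟩)
      · exact ⟨Or.inl rfl, le_refl _⟩
      · exact ⟨Or.inr ⟨h1, h3⟩, h2⟩
  have e2 : Set.Iio t \ T = Set.Iio t \ S := by
    ext x
    simp only [hT, Set.mem_diff, Set.mem_Iio, Set.mem_insert_iff, Set.mem_singleton_iff]
    constructor
    · rintro ⟨h1, h2⟩
      exact ⟨h1, fun hx => h2 (Or.inr ⟨hx, by omega⟩)⟩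
    · rintro ⟨h1, h2⟩
      refine ⟨h1, ?_⟩
      rintro (rfl | ⟨h3, -⟩)
      · omega
      · exact h2 h3
  have hfinS : (S ∩ Set.Ici t).Finite := h.finite_inter_Ici t
  have hsmem : s ∈ S ∩ Set.Ici t := ⟨hs, by simp; omega⟩
  have htnot : t ∉ (S ∩ Set.Ici t) \ {s} := by
    rintro ⟨⟨h1, -⟩, -⟩; exact ht h1
  have hc1 : (T ∩ Set.Ici t).ncard = (S ∩ Set.Ici t).ncard := by
    rw [e1, Set.ncard_insert_of_notMem htnot (hfinS.diff (t := {s}))]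
    rw [Set.ncard_diff_singleton_add_one hsmem hfinS]
  have key : chAt T t = chAt S t := by
    rw [chAt, chAt, hc1, e2]
  rw [chAt_eq hMT t, chAt_eq h t] at key
  omega

/-- the charge of a shifted set. -/
lemma ch_shift {T : Set ℤ} (hM : Maya T) (c : ℤ) : ch {x : ℤ | x - c ∈ T} = ch T + c := by
  have e1 : {x : ℤ | x - c ∈ T} ∩ Set.Ici 0 = (fun y => y + c) '' (T ∩ Set.Ici (-c)) := by
    ext x
    simp only [Set.mem_inter_iff, Set.mem_setOf_eq, Set.mem_Ici, Set.mem_image]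
    constructor
    · rintro ⟨h1, h2⟩; exact ⟨x - c, ⟨h1, by omega⟩, by omega⟩
    · rintro ⟨y, ⟨h1, h2⟩, rfl⟩; exact ⟨by simpa using h1, by omega⟩
  have e2 : Set.Iio 0 \ {x : ℤ | x - c ∈ T} = (fun y => y + c) '' (Set.Iio (-c) \ T) := by
    ext x
    simp only [Set.mem_diff, Set.mem_Iio, Set.mem_setOf_eq, Set.mem_image]
    constructor
    · rintro ⟨h1, h2⟩; exact ⟨x - c, ⟨by omega, h2⟩, by omega⟩
    · rintro ⟨y, ⟨h1, h2⟩, rfl⟩; exact ⟨by omega, by simpa using h2⟩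
  have hinj : Function.Injective (fun y : ℤ => y + c) := fun a b h => by
    simp only at h; omega
  rw [ch, chAt, e1, e2, Set.ncard_image_of_injective _ hinj, Set.ncard_image_of_injective _ hinj]
  have h5 : chAt T (-c) = ch T + c := by rw [chAt_eq hM]; ring
  rw [chAt] at h5
  omega


def lineSet (r : ℕ) (S : Set ℤ) (i : ℤ) : Set ℤ := {k | i + k * r ∈ S}

lemma mem_lineSet {r : ℕ} {S : Set ℤ} {i k : ℤ} : k ∈ lineSet r S i ↔ i + k * r ∈ S := Iff.rfl

lemma Maya.lineSet {r : ℕ} {S : Set ℤ} (h : Maya S) (hr : 1 ≤ r) (i : ℤ) :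
    Maya (lineSet r S i) := by
  obtain ⟨⟨b, hb⟩, M, hM⟩ := h
  constructor
  · refine ⟨max 0 (b - i), fun k hk => ?_⟩
    rcases le_or_gt k 0 with h0 | h0
    · exact le_trans h0 (le_max_left _ _)
    · have h1 : i + k * r ≤ b := hb _ hk
      have h2 : k * 1 ≤ k * r := by
        apply mul_le_mul_of_nonneg_left _ (by omega)
        exact_mod_cast hr
      refine le_trans ?_ (le_max_right _ _)
      omega
  · refine ⟨-(|M - i| + 1), fun k hk => ?_⟩
    apply hM
    have hr' : (1:ℤ) ≤ r := by exact_mod_cast hr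
    have h0 : (0:ℤ) ≤ |M - i| := abs_nonneg _
    have h2 : k * (r:ℤ) ≤ k := by nlinarith [mul_nonneg (by omega : (0:ℤ) ≤ -k) (by omega : (0:ℤ) ≤ (r:ℤ) - 1)]
    have h3 : i - M ≤ |M - i| := (abs_sub_comm M i) ▸ le_abs_self (i - M)
    omega

lemma charge_eq_ch_lineSet {r : ℕ} {S : Set ℤ} (h : Maya S) (hr : 1 ≤ r) (i : ℤ) :
    charge r S i = ch (lineSet r S i) := by
  have hL := h.lineSet hr i
  have e1 : ((↑) : ℕ → ℤ) '' {k : ℕ | i + (k : ℤ) * r ∈ S} = lineSet r S i ∩ Set.Ici 0 := by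
    ext x
    simp only [Set.mem_image, Set.mem_setOf_eq, Set.mem_inter_iff, mem_lineSet, Set.mem_Ici]
    constructor
    · rintro ⟨k, hk, rfl⟩; exact ⟨hk, by positivity⟩
    · rintro ⟨h1, h2⟩; exact ⟨x.toNat, by rwa [Int.toNat_of_nonneg h2], Int.toNat_of_nonneg h2⟩
  have e2 : (fun k : ℕ => -((k : ℤ) + 1)) '' {k : ℕ | i - ((k : ℤ) + 1) * r ∉ S} =
      Set.Iio 0 \ lineSet r S i := by
    ext x
    simp only [Set.mem_image, Set.mem_setOf_eq, Set.mem_diff, Set.mem_Iio, mem_lineSet]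
    constructor
    · rintro ⟨k, hk, rfl⟩
      constructor
      · omega
      · intro hc; apply hk
        have : i - ((k:ℤ)+1) * r = i + (-((k:ℤ)+1)) * r := by ring
        rwa [this]
    · rintro ⟨h1, h2⟩
      refine ⟨(-x - 1).toNat, ?_, by omega⟩
      intro hc; apply h2
      have hx : ((( -x - 1).toNat : ℤ) + 1) = -x := by omega
      rw [show i + x * (r:ℤ) = i - (-x) * r by ring, ← hx]
      exact hc
  have i1 : Function.Injective ((↑) : ℕ → ℤ) := fun a b h => by exact_mod_cast h
  have i2 : Function.Injective (fun k : ℕ => -((k : ℤ) + 1)) := fun a b h => by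
    simp only at h; omega
  rw [charge, ← Set.ncard_image_of_injective _ i1, ← Set.ncard_image_of_injective _ i2, e1, e2]
  rfl

lemma mem_iff_lineSet {r : ℕ} (hr : 1 ≤ r) {S : Set ℤ} (m : ℤ) :
    m ∈ S ↔ m / r ∈ lineSet r S (m % r) := by
  rw [mem_lineSet]
  have h1 : (m % r) + (m / r) * r = m := by
    have h2 := Int.emod_add_mul_ediv m r
    have h3 : (m / r) * r = r * (m / r) := mul_comm _ _
    omega
  rw [h1]

lemma lineSet_ext {r : ℕ} (hr : 1 ≤ r) {S T : Set ℤ}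
    (h : ∀ i : ℤ, 0 ≤ i → i < r → lineSet r S i = lineSet r T i) : S = T := by
  ext m
  have h1 : (0:ℤ) ≤ m % r := Int.emod_nonneg m (by omega)
  have h2 : m % r < r := Int.emod_lt_of_pos m (by exact_mod_cast hr)
  rw [mem_iff_lineSet hr m, mem_iff_lineSet hr m, h _ h1 h2]

/-- under a bead move of step divisible by r, all line charges in range are preserved -/
lemma lineSet_move {r : ℕ} (hr : 1 ≤ r) {S : Set ℤ} (h : Maya S) {s t : ℤ}
    (hts : t < s) (hs : s ∈ S) (ht : t ∉ S) (hdvd : (r : ℤ) ∣ (s - t))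
    (i : ℤ) (hi0 : 0 ≤ i) (hir : i < r) :
    ch (lineSet r (insert t (S \ {s})) i) = ch (lineSet r S i) := by
  by_cases hres : i = s % r
  · -- the moved line
    obtain ⟨d, hd⟩ := hdvd
    have hrpos : (0:ℤ) < r := by exact_mod_cast hr
    have hrne : (r:ℤ) ≠ 0 := by omega
    have hks : s = i + (s / r) * r := by
      subst hres
      have h2 := Int.emod_add_mul_ediv s r
      have h3 : (s / r) * (r:ℤ) = r * (s / r) := mul_comm _ _
      omega
    have hkt : t = i + (s / r - d) * r := by
      have h9 : (s / r - d) * (r:ℤ) = s / r * r - r * d := by ring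
      omega
    have e : lineSet r (insert t (S \ {s})) i =
        insert (s / r - d) (lineSet r S i \ {s / r}) := by
      ext k
      simp only [lineSet, Set.mem_insert_iff, Set.mem_setOf_eq, Set.mem_diff,
        Set.mem_singleton_iff]
      constructor
      · rintro (hk | ⟨hk1, hk2⟩)
        · left
          rw [hkt] at hk
          have h9 : k * (r:ℤ) = (s / r - d) * r := by omega
          exact mul_right_cancel₀ hrne h9
        · right
          refine ⟨hk1, ?_⟩
          intro hc; apply hk2; rw [hc, ← hks]
      · rintro (rfl | ⟨hk1, hk2⟩)
        · left; rw [← hkt]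
        · right
          refine ⟨hk1, ?_⟩
          intro hc
          apply hk2
          rw [hks] at hc
          have h9 : k * (r:ℤ) = (s / r) * r := by omega
          exact mul_right_cancel₀ hrne h9
    rw [e]
    apply ch_move (h.lineSet hr i)
    · have hd0 : 0 < d := by nlinarith [hd, hts, hrpos]
      omega
    · rw [mem_lineSet, ← hks]; exact hs
    · rw [mem_lineSet, ← hkt]; exact ht
  · -- untouched lines
    have e : lineSet r (insert t (S \ {s})) i = lineSet r S i := by
      ext k
      simp only [lineSet, Set.mem_insert_iff, Set.mem_setOf_eq, Set.mem_diff,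
        Set.mem_singleton_iff]
      have hrpos : (0:ℤ) < r := by exact_mod_cast hr
      have hne_s : i + k * r ≠ s := by
        intro hc
        apply hres
        rw [← hc]
        rw [Int.add_mul_emod_self_right]
        exact (Int.emod_eq_of_lt hi0 hir).symm
      have hne_t : i + k * r ≠ t := by
        intro hc
        apply hres
        obtain ⟨d, hd⟩ := hdvd
        have h8 : s = i + (k + d) * r := by
          have h9 : (k + d) * (r:ℤ) = k * r + r * d := by ring
          omega
        rw [h8, Int.add_mul_emod_self_right]
        exact (Int.emod_eq_of_lt hi0 hir).symm
      constructor
      · rintro (hk | ⟨hk1, -⟩)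
        · exact absurd hk hne_t
        · exact hk1
      · intro hk
        exact Or.inr ⟨hk, hne_s⟩
    rw [e]

def Packed (r : ℕ) (S : Set ℤ) : Prop := ∀ s ∈ S, s - r ∈ S

lemma ch_Iio (c : ℤ) : ch (Set.Iio c) = c := by
  have hM : Maya (Set.Iio c) := ⟨⟨c, fun x hx => le_of_lt (Set.mem_Iio.1 hx)⟩,
    ⟨c - 1, fun n hn => Set.mem_Iio.2 (by omega)⟩⟩
  have h0 : chAt (Set.Iio c) c = 0 := by
    have e1 : Set.Iio c ∩ Set.Ici c = ∅ := by
      ext x; simp only [Set.mem_inter_iff, Set.mem_Iio, Set.mem_Ici, Set.mem_empty_iff_false]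
      exact iff_false_intro (by omega)
    have e2 : Set.Iio c \ Set.Iio c = ∅ := by simp
    rw [chAt, e1, e2]; simp
  have := chAt_eq hM c
  omega

lemma downwardClosed_eq_Iio {L : Set ℤ} (hM : Maya L) (hdc : ∀ k ∈ L, k - 1 ∈ L) :
    L = Set.Iio (ch L) := by
  obtain ⟨⟨b, hb⟩, M, hM'⟩ := hM
  obtain ⟨G, hG1, hG2⟩ := Int.exists_greatest_of_bdd ⟨b, fun z hz => hb z hz⟩ ⟨M, hM' M le_rfl⟩
  have key : L = Set.Iio (G + 1) := by
    ext x
    simp only [Set.mem_Iio]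
    constructor
    · intro hx
      have := hG2 x hx
      omega
    · intro hx
      have hle : x ≤ G := by omega
      obtain ⟨n, hn⟩ : ∃ n : ℕ, x = G - n := ⟨(G - x).toNat, by omega⟩
      subst hn
      clear hx hle
      induction n with
      | zero => simpa using hG1
      | succ k ih =>
          have h7 := hdc _ ih
          have e : G - ((k+1:ℕ):ℤ) = G - (k:ℕ) - 1 := by push_cast; ring
          rw [e]
          exact h7
  nth_rewrite 1 [key]
  rw [key, ch_Iio]

lemma Packed.lineSet_eq_Iio {r : ℕ} (hr : 1 ≤ r) {S : Set ℤ} (hM : Maya S)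
    (hp : Packed r S) (i : ℤ) : lineSet r S i = Set.Iio (ch (lineSet r S i)) := by
  apply downwardClosed_eq_Iio (hM.lineSet hr i)
  intro k hk
  rw [mem_lineSet] at hk ⊢
  have : i + (k - 1) * r = (i + k * r) - r := by ring
  rw [this]
  exact hp _ hk


lemma resclass_card_split {r : ℕ} (hr : 1 ≤ r) {A : Set ℤ} (hA : A.Finite) :
    A.ncard = ∑ i ∈ Finset.range r, (A ∩ {m | m % r = i}).ncard := by
  classical
  have hrz : (0:ℤ) < r := by exact_mod_cast hr
  set F := hA.toFinset with hF
  have hsplit : F = (Finset.range r).biUnion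
      (fun i => F.filter (fun m => m % (r:ℤ) = (i:ℤ))) := by
    ext m
    simp only [Finset.mem_biUnion, Finset.mem_range, Finset.mem_filter]
    constructor
    · intro hm
      refine ⟨(m % r).toNat, ?_, hm, ?_⟩
      · have h1 := Int.emod_nonneg m (by omega : (r:ℤ) ≠ 0)
        have h2 := Int.emod_lt_of_pos m hrz
        omega
      · have h1 := Int.emod_nonneg m (by omega : (r:ℤ) ≠ 0)
        omega
    · rintro ⟨i, -, hm, -⟩; exact hm
  have hdisj : ∀ x ∈ Finset.range r, ∀ y ∈ Finset.range r, x ≠ y →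
      Disjoint (F.filter (fun m => m % (r:ℤ) = (x:ℤ)))
        (F.filter (fun m => m % (r:ℤ) = (y:ℤ))) := by
    intro x hx y hy hxy
    apply Finset.disjoint_left.2
    intro m hm1 hm2
    simp only [Finset.mem_filter] at hm1 hm2
    apply hxy
    have := hm1.2.symm.trans hm2.2
    exact_mod_cast this
  have hcard : F.card = ∑ i ∈ Finset.range r, (F.filter (fun m => m % (r:ℤ) = (i:ℤ))).card := by
    have h9 := Finset.card_biUnion hdisj
    rw [← hsplit] at h9
    exact h9
  rw [← Set.ncard_coe_finset F, hF] at hcard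
  rw [Set.Finite.coe_toFinset] at hcard
  rw [hcard]
  apply Finset.sum_congr rfl
  intro i _
  rw [← Set.ncard_coe_finset]
  congr 1
  ext m
  simp only [Finset.coe_filter, Set.Finite.mem_toFinset, Set.mem_setOf_eq, Set.mem_inter_iff, hF]

lemma ncard_line_pos {r : ℕ} (hr : 1 ≤ r) {S : Set ℤ} (h : Maya S) (i : ℤ)
    (hi0 : 0 ≤ i) (hir : i < r) :
    (S ∩ Set.Ici 0 ∩ {m : ℤ | m % (r:ℤ) = i}).ncard = (lineSet r S i ∩ Set.Ici 0).ncard := by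
  have hrz : (0:ℤ) < r := by exact_mod_cast hr
  have himg : lineSet r S i ∩ Set.Ici 0 =
      (fun m : ℤ => m / r) '' (S ∩ Set.Ici 0 ∩ {m : ℤ | m % (r:ℤ) = i}) := by
    ext k
    simp only [Set.mem_inter_iff, mem_lineSet, Set.mem_Ici, Set.mem_image, Set.mem_setOf_eq]
    constructor
    · rintro ⟨h1, h2⟩
      refine ⟨i + k * r, ⟨⟨h1, ?_⟩, ?_⟩, ?_⟩
      · nlinarith
      · rw [Int.add_mul_emod_self_right]; exact Int.emod_eq_of_lt hi0 hir
      · rw [Int.add_mul_ediv_right _ _ (by omega : (r:ℤ) ≠ 0),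
          Int.ediv_eq_zero_of_lt hi0 hir]; ring
    · rintro ⟨m, ⟨⟨h1, h2⟩, h3⟩, rfl⟩
      have h4 := Int.emod_add_mul_ediv m r
      have h5 : (m / r) * (r:ℤ) = r * (m / r) := mul_comm _ _
      constructor
      · have : i + (m / r) * r = m := by omega
        rwa [this]
      · exact Int.ediv_nonneg h2 (by omega)
  rw [himg, Set.ncard_image_of_injOn]
  intro m hm m' hm' hmm
  simp only [Set.mem_inter_iff, Set.mem_setOf_eq] at hm hm'
  have h4 := Int.emod_add_mul_ediv m r
  have h5 := Int.emod_add_mul_ediv m' r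
  simp only at hmm
  rw [← h4, ← h5, hm.2, hm'.2, hmm]

lemma ncard_line_neg {r : ℕ} (hr : 1 ≤ r) {S : Set ℤ} (h : Maya S) (i : ℤ)
    (hi0 : 0 ≤ i) (hir : i < r) :
    ((Set.Iio 0 \ S) ∩ {m : ℤ | m % (r:ℤ) = i}).ncard = (Set.Iio 0 \ lineSet r S i).ncard := by
  have hrz : (0:ℤ) < r := by exact_mod_cast hr
  have himg : Set.Iio 0 \ lineSet r S i =
      (fun m : ℤ => m / r) '' ((Set.Iio 0 \ S) ∩ {m : ℤ | m % (r:ℤ) = i}) := by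
    ext k
    simp only [Set.mem_diff, Set.mem_Iio, mem_lineSet, Set.mem_image, Set.mem_setOf_eq,
      Set.mem_inter_iff]
    constructor
    · rintro ⟨h1, h2⟩
      refine ⟨i + k * r, ⟨⟨?_, h2⟩, ?_⟩, ?_⟩
      · nlinarith
      · rw [Int.add_mul_emod_self_right]; exact Int.emod_eq_of_lt hi0 hir
      · rw [Int.add_mul_ediv_right _ _ (by omega : (r:ℤ) ≠ 0),
          Int.ediv_eq_zero_of_lt hi0 hir]; ring
    · rintro ⟨m, ⟨⟨h1, h2⟩, h3⟩, rfl⟩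
      have h4 := Int.emod_add_mul_ediv m r
      have h5 : (m / r) * (r:ℤ) = r * (m / r) := mul_comm _ _
      have h6 := Int.emod_nonneg m (by omega : (r:ℤ) ≠ 0)
      have h7 := Int.emod_lt_of_pos m hrz
      constructor
      · by_contra hc
        push_neg at hc
        have h9 : 0 ≤ (r:ℤ) * (m / r) := mul_nonneg (by omega) hc
        omega
      · have : i + (m / r) * r = m := by omega
        rwa [this]
  rw [himg, Set.ncard_image_of_injOn]
  intro m hm m' hm' hmm
  simp only [Set.mem_inter_iff, Set.mem_setOf_eq] at hm hm'
  have h4 := Int.emod_add_mul_ediv m r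
  have h5 := Int.emod_add_mul_ediv m' r
  simp only at hmm
  rw [← h4, ← h5, hm.2, hm'.2, hmm]

lemma ch_sum {r : ℕ} (hr : 1 ≤ r) {S : Set ℤ} (h : Maya S) :
    ch S = ∑ i ∈ Finset.range r, ch (lineSet r S (i:ℤ)) := by
  have e1 := resclass_card_split hr (h.finite_inter_Ici 0)
  have e2 := resclass_card_split hr (h.finite_diff_Iio 0)
  have e1' : (S ∩ Set.Ici 0).ncard
      = ∑ i ∈ Finset.range r, (lineSet r S (i:ℤ) ∩ Set.Ici 0).ncard := by
    rw [e1]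
    apply Finset.sum_congr rfl
    intro i hi
    simp only [Finset.mem_range] at hi
    exact ncard_line_pos hr h i (by positivity) (by exact_mod_cast hi)
  have e2' : (Set.Iio 0 \ S).ncard
      = ∑ i ∈ Finset.range r, (Set.Iio 0 \ lineSet r S (i:ℤ)).ncard := by
    rw [e2]
    apply Finset.sum_congr rfl
    intro i hi
    simp only [Finset.mem_range] at hi
    exact ncard_line_neg hr h i (by positivity) (by exact_mod_cast hi)
  simp only [ch, chAt, e1', e2']
  push_cast
  rw [Finset.sum_sub_distrib]


lemma exists_enum {S : Set ℤ} (hM : Maya S) :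
    ∃ g : ℕ → ℤ, StrictAnti g ∧ Set.range g = S := by
  classical
  obtain ⟨⟨b, hb⟩, M, hMl⟩ := hM
  have hex : ∀ x : ℤ, ∃ G, (G ∈ S ∧ G < x) ∧ ∀ y, (y ∈ S ∧ y < x) → y ≤ G := by
    intro x
    have h1 : ∃ z : ℤ, z ∈ S ∧ z < x := ⟨min M (x-1), hMl _ (min_le_left _ _), by
      have := min_le_right M (x-1); omega⟩
    have h2 : ∃ c : ℤ, ∀ z, (z ∈ S ∧ z < x) → z ≤ c := ⟨x, fun z hz => le_of_lt hz.2⟩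
    obtain ⟨G, hG⟩ := Int.exists_greatest_of_bdd h2 h1
    exact ⟨G, hG⟩
  choose next hnext using hex
  obtain ⟨T, hT⟩ := Int.exists_greatest_of_bdd ⟨b, hb⟩ ⟨M, hMl M le_rfl⟩
  set g : ℕ → ℤ := fun n => next^[n] T with hg
  have hgs : ∀ n, g (n+1) = next (g n) := fun n => Function.iterate_succ_apply' next n T
  have hmem : ∀ n, g n ∈ S := by
    intro n; induction n with
    | zero => exact hT.1
    | succ k ih => rw [hgs]; exact (hnext (g k)).1.1
  have hdec : ∀ n, g (n+1) < g n := fun n => by rw [hgs]; exact (hnext (g n)).1.2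
  have hSA : StrictAnti g := strictAnti_nat_of_succ_lt hdec
  refine ⟨g, hSA, ?_⟩
  apply Set.eq_of_subset_of_subset
  · rintro x ⟨n, rfl⟩; exact hmem n
  · intro t ht
    have hlin : ∀ n : ℕ, g n ≤ g 0 - n := by
      intro n; induction n with
      | zero => simp
      | succ k ih => have := hdec k; push_cast; omega
    have hg0 : t ≤ g 0 := hT.2 t ht
    have hex2 : ∃ n, g n ≤ t := ⟨(g 0 - t).toNat, by
      have := hlin (g 0 - t).toNat; omega⟩
    have hn : g (Nat.find hex2) ≤ t := Nat.find_spec hex2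
    rcases eq_or_lt_of_le hn with he | hlt
    · exact ⟨Nat.find hex2, he⟩
    · exfalso
      rcases Nat.eq_zero_or_pos (Nat.find hex2) with h0 | h0
      · rw [h0] at hlt; omega
      · obtain ⟨m, hm⟩ : ∃ m, Nat.find hex2 = m + 1 := ⟨Nat.find hex2 - 1, by omega⟩
        have hgt : ¬ g m ≤ t := Nat.find_min hex2 (by omega)
        have h3 := (hnext (g m)).2 t ⟨ht, by omega⟩
        rw [← hgs, ← hm] at h3
        omega

lemma enum_count {S : Set ℤ} {g : ℕ → ℤ} (hSA : StrictAnti g) (hr : Set.range g = S)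
    (n : ℕ) : (S ∩ Set.Ici (g n + 1)).ncard = n := by
  have he : S ∩ Set.Ici (g n + 1) = g '' (Set.Iio n) := by
    ext x
    simp only [Set.mem_inter_iff, Set.mem_Ici, Set.mem_image, Set.mem_Iio, ← hr,
      Set.mem_range]
    constructor
    · rintro ⟨⟨m, rfl⟩, hx⟩
      refine ⟨m, ?_, rfl⟩
      by_contra hc
      push_neg at hc
      have := hSA.antitone hc
      omega
    · rintro ⟨m, hm, rfl⟩
      exact ⟨⟨m, rfl⟩, by have := hSA hm; omega⟩
  rw [he, Set.ncard_image_of_injective _ hSA.injective]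
  rw [show (Set.Iio n : Set ℕ) = ↑(Finset.range n) by ext m; simp [Finset.mem_range]]
  rw [Set.ncard_coe_finset, Finset.card_range]

lemma enum_eventually {S : Set ℤ} (hM : Maya S) (h0 : ch S = 0) {g : ℕ → ℤ}
    (hSA : StrictAnti g) (hr : Set.range g = S) :
    ∃ N : ℕ, ∀ n : ℕ, N ≤ n → g n = -(n+1) := by
  obtain ⟨M, hMl⟩ := hM.2
  have hlin : ∀ n : ℕ, g n ≤ g 0 - n := by
    intro n; induction n with
    | zero => simp
    | succ k ih =>
        have h1 : g (k+1) < g k := hSA (by omega)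
        push_cast; omega
  refine ⟨(g 0 - M).toNat, fun n hn => ?_⟩
  have hgnM : g n ≤ M := by
    have h1 := hlin n
    omega
  have hcount := enum_count hSA hr n
  have hempty : Set.Iio (g n + 1) \ S = ∅ := by
    ext x
    simp only [Set.mem_diff, Set.mem_Iio, Set.mem_empty_iff_false, iff_false, not_and,
      not_not]
    intro hx
    exact hMl x (by omega)
  have h2 := chAt_eq hM (g n + 1)
  rw [chAt, hcount, hempty, h0] at h2
  simp only [Set.ncard_empty, Nat.cast_zero, sub_zero] at h2
  omega

lemma isBeta_of_maya {S : Set ℤ} (hM : Maya S) (h0 : ch S = 0) :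
    ∃ μ : YoungDiagram, betaSet μ = S := by
  obtain ⟨g, hSA, hrg⟩ := exists_enum hM
  obtain ⟨N, hN⟩ := enum_eventually hM h0 hSA hrg
  have hmono : ∀ m n : ℕ, m ≤ n → g n + n ≤ g m + m := by
    intro m n h
    obtain ⟨d, rfl⟩ := Nat.exists_eq_add_of_le h
    clear h
    induction d with
    | zero => simp
    | succ k ih =>
        have h1 : g (m + k + 1) < g (m + k) := hSA (by omega)
        have h2 : m + (k+1) = (m + k) + 1 := by omega
        rw [h2]
        push_cast
        push_cast at ih
        omega
  have hpos : ∀ n, 0 ≤ g n + n + 1 := by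
    intro n
    rcases le_or_gt N n with h | h
    · rw [hN n h]; push_cast; omega
    · have h1 := hmono n N (le_of_lt h)
      have h2 := hN N le_rfl
      omega
  set f : ℕ → ℕ := fun n => (g n + n + 1).toNat with hf
  have hcast : ∀ n, (f n : ℤ) = g n + n + 1 := fun n => Int.toNat_of_nonneg (hpos n)
  have hanti : ∀ i j : ℕ, i ≤ j → f j ≤ f i := by
    intro i j hij
    have h1 := hmono i j hij
    have h2 := hcast i
    have h3 := hcast j
    omega
  have hzero : ∀ i, N ≤ i → f i = 0 := by
    intro i hi
    have h1 := hN i hi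
    have h2 := hcast i
    omega
  refine ⟨ofFn f hanti N hzero, ?_⟩
  rw [betaSet_eq_range]
  have hbg : beta (ofFn f hanti N hzero) = g := by
    funext n
    rw [beta, rowLen_ofFn]
    have := hcast n
    omega
  rw [hbg, hrg]

lemma maya_betaSet (μ : YoungDiagram) : Maya (betaSet μ) := by
  obtain ⟨N, hN⟩ := exists_rowLen_zero μ
  rw [betaSet_eq_range]
  constructor
  · exact ⟨beta μ 0, by rintro x ⟨n, rfl⟩; exact (beta_strictAnti μ).antitone (Nat.zero_le n)⟩
  · refine ⟨-(N+1), ?_⟩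
    intro n hn
    refine ⟨(-n-1).toNat, ?_⟩
    have h1 : ((-n-1).toNat : ℤ) = -n-1 := by omega
    have h2 : N ≤ (-n-1).toNat := by omega
    rw [beta, hN _ h2]
    omega

lemma ch_betaSet (μ : YoungDiagram) : ch (betaSet μ) = 0 := by
  obtain ⟨N, hN⟩ := exists_rowLen_zero μ
  have hM := maya_betaSet μ
  have hcount := enum_count (beta_strictAnti μ) (betaSet_eq_range μ).symm N
  have hbN : beta μ N = -(N+1) := by rw [beta, hN N le_rfl]; push_cast; ring
  have hempty : Set.Iio (beta μ N + 1) \ betaSet μ = ∅ := by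
    ext x
    simp only [Set.mem_diff, Set.mem_Iio, Set.mem_empty_iff_false, iff_false, not_and,
      not_not, betaSet_eq_range, Set.mem_range]
    intro hx
    refine ⟨(-x-1).toNat, ?_⟩
    have h1 : ((-x-1).toNat : ℤ) = -x-1 := by omega
    have h2 : N ≤ (-x-1).toNat := by omega
    rw [beta, hN _ h2]
    omega
  have h2 := chAt_eq hM (beta μ N + 1)
  rw [chAt, hcount, hempty] at h2
  simp only [Set.ncard_empty, Nat.cast_zero, sub_zero] at h2
  omega

/-! ### Helpers for the ribbon characterization -/

lemma Adj_symm {a b : ℕ × ℕ} (h : Adj a b) : Adj b a := by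
  unfold Adj at *
  tauto

lemma telescope (f : ℕ → ℤ) (a b : ℕ) (hab : a ≤ b) :
    ∑ i ∈ Finset.Ico a b, (f i - f (i+1)) = f a - f b := by
  obtain ⟨d, rfl⟩ := Nat.exists_eq_add_of_le hab
  clear hab
  induction d with
  | zero => simp
  | succ k ih =>
      rw [show a + (k+1) = (a+k) + 1 by omega,
        Finset.sum_Ico_succ_top (by omega), ih]
      ring

lemma card_cells_eq_sum (μ : YoungDiagram) (K : ℕ) (hK : ∀ i, K ≤ i → μ.rowLen i = 0) :
    μ.cells.card = ∑ i ∈ Finset.range K, μ.rowLen i := by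
  classical
  have hsplit : μ.cells = (Finset.range K).biUnion (fun i => μ.row i) := by
    ext c
    simp only [Finset.mem_biUnion, Finset.mem_range, YoungDiagram.mem_row_iff,
      YoungDiagram.mem_cells]
    constructor
    · intro hc
      refine ⟨c.1, ?_, hc, rfl⟩
      by_contra hcon
      obtain ⟨i, j⟩ := c
      have h2 : j < μ.rowLen i := YoungDiagram.mem_iff_lt_rowLen.1 hc
      have := hK i (by omega)
      omega
    · rintro ⟨i, -, hc, -⟩; exact hc
  rw [hsplit, Finset.card_biUnion]
  · exact Finset.sum_congr rfl (fun i _ => (μ.rowLen_eq_card).symm)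
  · intro x hx y hy hxy
    apply Finset.disjoint_left.2
    intro c hc1 hc2
    rw [YoungDiagram.mem_row_iff] at hc1 hc2
    exact hxy (hc1.2 ▸ hc2.2 ▸ rfl)

lemma rowLen_le_of_cells_subset {μ ν : YoungDiagram} (h : ν.cells ⊆ μ.cells) (i : ℕ) :
    ν.rowLen i ≤ μ.rowLen i := by
  by_contra hc
  push_neg at hc
  have h1 : (i, μ.rowLen i) ∈ ν := YoungDiagram.mem_iff_lt_rowLen.2 hc
  have h2 : (i, μ.rowLen i) ∈ μ := (YoungDiagram.mem_cells _).1 (h ((YoungDiagram.mem_cells _).2 h1))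
  have := YoungDiagram.mem_iff_lt_rowLen.1 h2
  omega

lemma cells_subset_of_rowLen_le {μ ν : YoungDiagram} (h : ∀ i, ν.rowLen i ≤ μ.rowLen i) :
    ν.cells ⊆ μ.cells := by
  intro c hc
  obtain ⟨i, j⟩ := c
  rw [YoungDiagram.mem_cells, YoungDiagram.mem_iff_lt_rowLen] at hc ⊢
  exact lt_of_lt_of_le hc (h i)

lemma mem_diff_iff {μ ν : YoungDiagram} (hle : ∀ i, ν.rowLen i ≤ μ.rowLen i) (i j : ℕ) :
    ((i, j) ∈ ((μ.cells : Set (ℕ × ℕ)) \ (ν.cells : Set (ℕ × ℕ)))) ↔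
      (ν.rowLen i ≤ j ∧ j < μ.rowLen i) := by
  simp only [Set.mem_diff, Finset.mem_coe, YoungDiagram.mem_cells,
    YoungDiagram.mem_iff_lt_rowLen]
  omega

lemma mem_fdiff_iff {μ ν : YoungDiagram} (hle : ∀ i, ν.rowLen i ≤ μ.rowLen i) (i j : ℕ) :
    ((i, j) ∈ μ.cells \ ν.cells) ↔ (ν.rowLen i ≤ j ∧ j < μ.rowLen i) := by
  simp only [Finset.mem_sdiff, YoungDiagram.mem_cells, YoungDiagram.mem_iff_lt_rowLen]
  omega

/-- horizontal path inside the skew diagram -/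
lemma horiz_path {μ ν : YoungDiagram} (hle : ∀ i, ν.rowLen i ≤ μ.rowLen i) (i j1 j2 : ℕ)
    (h1 : ν.rowLen i ≤ j1) (h2 : j1 ≤ j2) (h3 : j2 < μ.rowLen i) :
    Relation.ReflTransGen
      (fun a b => Adj a b ∧ a ∈ ((μ.cells : Set (ℕ × ℕ)) \ (ν.cells : Set (ℕ × ℕ)))
        ∧ b ∈ ((μ.cells : Set (ℕ × ℕ)) \ (ν.cells : Set (ℕ × ℕ)))) (i, j1) (i, j2) := by
  obtain ⟨d, rfl⟩ := Nat.exists_eq_add_of_le h2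
  clear h2
  induction d with
  | zero => exact Relation.ReflTransGen.refl
  | succ k ih =>
      refine Relation.ReflTransGen.tail (ih (by omega)) ?_
      refine ⟨Or.inl ⟨rfl, Or.inl (by omega)⟩, ?_, ?_⟩
      · exact (mem_diff_iff hle _ _).2 ⟨by omega, by omega⟩
      · exact (mem_diff_iff hle _ _).2 ⟨by omega, by omega⟩

lemma rtg_symm {D : Set (ℕ × ℕ)} {x y : ℕ × ℕ}
    (h : Relation.ReflTransGen (fun a b => Adj a b ∧ a ∈ D ∧ b ∈ D) x y) :
    Relation.ReflTransGen (fun a b => Adj a b ∧ a ∈ D ∧ b ∈ D) y x := by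
  induction h with
  | refl => exact Relation.ReflTransGen.refl
  | tail hp hs ih => exact Relation.ReflTransGen.head ⟨Adj_symm hs.1, hs.2.2, hs.2.1⟩ ih

lemma strictAnti_le_sub {g : ℕ → ℤ} (h : StrictAnti g) (n : ℕ) : g n ≤ g 0 - n := by
  induction n with
  | zero => simp
  | succ k ih =>
      have h1 : g (k+1) < g k := h (by omega)
      push_cast
      omega

lemma ribbon_of_move {r : ℕ} (hr : 1 ≤ r) {μ ν : YoungDiagram} {s : ℤ}
    (hs : s ∈ betaSet μ) (hsr : s - (r:ℤ) ∉ betaSet μ)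
    (hν : betaSet ν = insert (s - (r:ℤ)) (betaSet μ \ {s})) :
    IsRibbonOf r μ ν := by
  classical
  have hBA := beta_strictAnti μ
  obtain ⟨a, ha⟩ : ∃ a, beta μ a = s := by rw [betaSet_eq_range] at hs; exact hs
  set K := (beta μ 0 - (s - r)).toNat with hKdef
  set P : ℕ → Prop := fun i => s - r < beta μ i with hPdef
  have hPbound : ∀ i, P i → i ≤ K := by
    intro i hi
    have h1 := strictAnti_le_sub hBA i
    simp only [hPdef] at hi
    omega
  have hPa : P a := by simp only [hPdef, ha]; omega
  set b := Nat.findGreatest P K with hbdef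
  have hab : a ≤ b := by
    by_contra hc
    push_neg at hc
    exact Nat.findGreatest_is_greatest hc (hPbound a hPa) hPa
  have hb1 : s - r < beta μ b := Nat.findGreatest_spec (hPbound a hPa) hPa
  have hb2 : beta μ (b+1) < s - r := by
    have h1 : ¬ P (b+1) := by
      rcases le_or_gt (b+1) K with h | h
      · exact Nat.findGreatest_is_greatest (by omega) h
      · intro hp; exact absurd (hPbound _ hp) (by omega)
    have h2 : beta μ (b+1) ≠ s - r := by
      intro he; apply hsr; rw [betaSet_eq_range]; exact ⟨b+1, he⟩
    simp only [hPdef] at h1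
    omega
  set g : ℕ → ℤ := fun i => if i < a then beta μ i else if i < b then beta μ (i+1)
    else if i = b then s - r else beta μ i with hgdef
  have hga : ∀ i, i < a → g i = beta μ i := by intro i hi; simp only [hgdef, if_pos hi]
  have hgm : ∀ i, a ≤ i → i < b → g i = beta μ (i+1) := by
    intro i h1 h2; simp only [hgdef, if_neg (by omega : ¬ i < a), if_pos h2]
  have hgb : g b = s - r := by
    simp only [hgdef, if_neg (by omega : ¬ b < a), if_neg (by omega : ¬ b < b), if_pos rfl]
    simp
  have hgg : ∀ i, b < i → g i = beta μ i := by
    intro i hi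
    simp only [hgdef, if_neg (by omega : ¬ i < a), if_neg (by omega : ¬ i < b),
      if_neg (by omega : ¬ i = b)]
  have hgsa : StrictAnti g := by
    apply strictAnti_nat_of_succ_lt
    intro i
    by_cases h1 : i + 1 < a
    · rw [hga (i+1) h1, hga i (by omega)]; exact hBA (by omega)
    · by_cases h2 : i + 1 = a
      · rw [hga i (by omega), h2]
        by_cases h3 : a < b
        · rw [hgm a le_rfl h3]
          exact hBA (by omega)
        · have hba : a = b := by omega
          rw [show g a = s - r by rw [hba]; exact hgb]
          have h4 : beta μ a < beta μ i := hBA (by omega)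
          omega
      · have h4 : a ≤ i := by omega
        by_cases h5 : i + 1 < b
        · rw [hgm i h4 (by omega), hgm (i+1) (by omega) h5]
          exact hBA (by omega)
        · by_cases h6 : i + 1 = b
          · rw [hgm i h4 (by omega), h6, hgb]
            rw [← h6]
            exact hb1.trans_eq (by rw [h6])
          · by_cases h7 : i = b
            · rw [h7, hgb, hgg (b+1) (by omega)]; exact hb2
            · rw [hgg i (by omega), hgg (i+1) (by omega)]; exact hBA (by omega)
  have hrange : Set.range g = insert (s - (r:ℤ)) (betaSet μ \ {s}) := by
    apply Set.eq_of_subset_of_subset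
    · rintro x ⟨i, rfl⟩
      simp only [Set.mem_insert_iff, Set.mem_diff, Set.mem_singleton_iff, betaSet_eq_range,
        Set.mem_range]
      by_cases h1 : i < a
      · rw [hga i h1]
        refine Or.inr ⟨⟨i, rfl⟩, fun he => ?_⟩
        have : i = a := hBA.injective (he.trans ha.symm)
        omega
      · by_cases h2 : i < b
        · rw [hgm i (by omega) h2]
          refine Or.inr ⟨⟨i+1, rfl⟩, fun he => ?_⟩
          have : i + 1 = a := hBA.injective (he.trans ha.symm)
          omega
        · by_cases h3 : i = b
          · rw [h3, hgb]; exact Or.inl rfl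
          · rw [hgg i (by omega)]
            refine Or.inr ⟨⟨i, rfl⟩, fun he => ?_⟩
            have : i = a := hBA.injective (he.trans ha.symm)
            omega
    · intro x hx
      simp only [Set.mem_insert_iff, Set.mem_diff, Set.mem_singleton_iff, betaSet_eq_range,
        Set.mem_range] at hx
      rcases hx with rfl | ⟨⟨i, rfl⟩, hne⟩
      · exact ⟨b, hgb⟩
      · have hia : i ≠ a := fun he => hne (he ▸ ha ▸ rfl)
        by_cases h1 : i < a
        · exact ⟨i, hga i h1⟩
        · by_cases h2 : i ≤ b
          · exact ⟨i - 1, by rw [hgm (i-1) (by omega) (by omega), show i - 1 + 1 = i by omega]⟩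
          · exact ⟨i, hgg i (by omega)⟩
  have hgbeta : beta ν = g := by
    apply strictAnti_range_eq (beta_strictAnti ν) hgsa
    rw [← betaSet_eq_range, hν, ← hrange]
  -- row length facts
  have hrow_lt : ∀ i, i < a → ν.rowLen i = μ.rowLen i := by
    intro i hi
    have h1 := congrFun hgbeta i
    rw [hga i hi] at h1
    simp only [beta] at h1
    omega
  have hrow_mid : ∀ i, a ≤ i → i < b → (ν.rowLen i : ℤ) = (μ.rowLen (i+1) : ℤ) - 1 := by
    intro i h1 h2
    have h3 := congrFun hgbeta i
    rw [hgm i h1 h2] at h3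
    simp only [beta] at h3
    push_cast at h3
    omega
  have hrow_b : (ν.rowLen b : ℤ) = s - r + b + 1 := by
    have h3 := congrFun hgbeta b
    rw [hgb] at h3
    simp only [beta] at h3
    omega
  have hrow_gt : ∀ i, b < i → ν.rowLen i = μ.rowLen i := by
    intro i hi
    have h1 := congrFun hgbeta i
    rw [hgg i hi] at h1
    simp only [beta] at h1
    omega
  have hsa' : (μ.rowLen a : ℤ) = s + a + 1 := by
    simp only [beta] at ha
    omega
  have hb1' : s - r < (μ.rowLen b : ℤ) - (b + 1) := by
    simpa only [beta] using hb1
  have hle : ∀ i, ν.rowLen i ≤ μ.rowLen i := by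
    intro i
    by_cases h1 : i < a
    · rw [hrow_lt i h1]
    · by_cases h2 : i < b
      · have h3 := hrow_mid i (by omega) h2
        have h4 := μ.rowLen_anti i (i+1) (by omega)
        omega
      · by_cases h3 : i = b
        · subst h3
          have := hrow_b
          omega
        · rw [hrow_gt i (by omega)]
  have hne : ∀ i, a ≤ i → i ≤ b → ν.rowLen i < μ.rowLen i := by
    intro i h1 h2
    by_cases h3 : i < b
    · have h4 := hrow_mid i h1 h3
      have h5 := μ.rowLen_anti i (i+1) (by omega)
      omega
    · have h4 : i = b := by omega
      subst h4
      have := hrow_b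
      omega
  have hempty : ∀ i, i < a ∨ b < i → ν.rowLen i = μ.rowLen i := by
    intro i hi
    rcases hi with h | h
    · exact hrow_lt i h
    · exact hrow_gt i h
  have hsub := cells_subset_of_rowLen_le hle
  have hrowsD : ∀ i j : ℕ, (i, j) ∈ ((μ.cells : Set (ℕ × ℕ)) \ (ν.cells : Set (ℕ × ℕ))) →
      a ≤ i ∧ i ≤ b := by
    intro i j hij
    rw [mem_diff_iff hle] at hij
    by_contra hc
    push_neg at hc
    have : ν.rowLen i = μ.rowLen i := by
      rcases Nat.lt_or_ge i a with h | h
      · exact hempty i (Or.inl h)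
      · exact hempty i (Or.inr (hc h))
    omega
  -- cardinality
  obtain ⟨N, hN⟩ := exists_rowLen_zero μ
  set K' := max N (b+1) with hK'def
  have hKμ : ∀ i, K' ≤ i → μ.rowLen i = 0 := fun i hi => hN i (by omega)
  have hKν : ∀ i, K' ≤ i → ν.rowLen i = 0 := fun i hi => by
    have := hle i
    have := hN i (by omega)
    omega
  have hcard : (μ.cells \ ν.cells).card = r := by
    have hcμ := card_cells_eq_sum μ K' hKμ
    have hcν := card_cells_eq_sum ν K' hKν
    have hsum : ∑ i ∈ Finset.range K', ((μ.rowLen i : ℤ) - ν.rowLen i) = r := by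
      have hstep1 : ∑ i ∈ Finset.Ico a (b+1), ((μ.rowLen i:ℤ) - ν.rowLen i)
          = ∑ i ∈ Finset.range K', ((μ.rowLen i:ℤ) - ν.rowLen i) := by
        apply Finset.sum_subset
        · intro i hi
          simp only [Finset.mem_Ico] at hi
          simp only [Finset.mem_range]
          omega
        · intro i hi hni
          simp only [Finset.mem_Ico] at hni
          push_neg at hni
          have : ν.rowLen i = μ.rowLen i := by
            rcases Nat.lt_or_ge i a with h | h
            · exact hempty i (Or.inl h)
            · exact hempty i (Or.inr (by omega))
          omega
      rw [← hstep1, Finset.sum_Ico_succ_top (by omega)]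
      have hstep2 : ∑ i ∈ Finset.Ico a b, ((μ.rowLen i:ℤ) - ν.rowLen i)
          = ∑ i ∈ Finset.Ico a b, (((μ.rowLen i:ℤ) - μ.rowLen (i+1)) + 1) := by
        apply Finset.sum_congr rfl
        intro i hi
        simp only [Finset.mem_Ico] at hi
        have := hrow_mid i hi.1 hi.2
        omega
      rw [hstep2, Finset.sum_add_distrib, telescope (fun i => (μ.rowLen i : ℤ)) a b hab]
      simp only [Finset.sum_const, Nat.card_Ico, nsmul_eq_mul, mul_one]
      have h1 := hrow_b
      have h2 := hsa'
      push_cast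
      omega
    have hcards : (μ.cells.card : ℤ) - ν.cells.card = r := by
      rw [hcμ, hcν]
      push_cast
      rw [← Finset.sum_sub_distrib] at *
      exact hsum
    have hlecard : ν.cells.card ≤ μ.cells.card := Finset.card_le_card hsub
    rw [Finset.card_sdiff_of_subset hsub]
    omega
  -- connectivity
  have hconn : ConnectedCells ((μ.cells : Set (ℕ × ℕ)) \ (ν.cells : Set (ℕ × ℕ))) := by
    set D := ((μ.cells : Set (ℕ × ℕ)) \ (ν.cells : Set (ℕ × ℕ))) with hD
    have hanchor : ∀ d : ℕ, ∀ i j : ℕ, b - i = d → (i, j) ∈ D →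
        Relation.ReflTransGen (fun x y => Adj x y ∧ x ∈ D ∧ y ∈ D) (i, j) (b, ν.rowLen b) := by
      intro d
      induction d with
      | zero =>
          intro i j hd hij
          have hib : i = b := by
            have := hrowsD i j hij
            omega
          subst hib
          rw [mem_diff_iff hle] at hij
          exact rtg_symm (horiz_path hle b (ν.rowLen b) j le_rfl hij.1 hij.2)
      | succ d ih =>
          intro i j hd hij
          obtain ⟨hai, hib⟩ := hrowsD i j hij
          have hilt : i < b := by omega
          rw [mem_diff_iff hle] at hij
          have hmid := hrow_mid i hai hilt
          have hν1 : ν.rowLen (i+1) ≤ ν.rowLen i := ν.rowLen_anti i (i+1) (by omega)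
          have hii : ν.rowLen i < μ.rowLen i := hne i hai (by omega)
          have hi1 : ν.rowLen i < μ.rowLen (i+1) := by omega
          have p1 := rtg_symm (horiz_path hle i (ν.rowLen i) j le_rfl hij.1 hij.2)
          have pstep : Relation.ReflTransGen (fun x y => Adj x y ∧ x ∈ D ∧ y ∈ D)
              (i, ν.rowLen i) (i+1, ν.rowLen i) := by
            apply Relation.ReflTransGen.single
            refine ⟨Or.inr ⟨rfl, Or.inl rfl⟩, ?_, ?_⟩
            · exact (mem_diff_iff hle _ _).2 ⟨le_rfl, hii⟩
            · exact (mem_diff_iff hle _ _).2 ⟨hν1, hi1⟩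
          have p3 := rtg_symm (horiz_path hle (i+1) (ν.rowLen (i+1)) (ν.rowLen i) le_rfl hν1 hi1)
          have p4 := ih (i+1) (ν.rowLen (i+1)) (by omega)
            ((mem_diff_iff hle _ _).2 ⟨le_rfl, hne (i+1) (by omega) (by omega)⟩)
          exact p1.trans (pstep.trans (p3.trans p4))
    intro x hx y hy
    obtain ⟨i, j⟩ := x
    obtain ⟨i', j'⟩ := y
    exact (hanchor (b - i) i j rfl hx).trans (rtg_symm (hanchor (b - i') i' j' rfl hy))
  refine ⟨hsub, hcard, hconn, ?_⟩
  -- no 2x2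
  rintro i j ⟨h1, h2, h3, h4⟩
  rw [mem_fdiff_iff hle] at h1 h2 h3 h4
  have hr1 : a ≤ i ∧ i ≤ b := by
    apply hrowsD i j
    rw [mem_diff_iff hle]
    exact h1
  have hr2 : a ≤ i + 1 ∧ i + 1 ≤ b := by
    apply hrowsD (i+1) j
    rw [mem_diff_iff hle]
    exact h2
  have hmid := hrow_mid i hr1.1 (by omega)
  have hj1 : ν.rowLen i ≤ j := h1.1
  have hj2 : j + 1 < μ.rowLen (i+1) := h4.2
  omega

lemma move_of_ribbon {r : ℕ} (hr : 1 ≤ r) {μ ν : YoungDiagram} (h : IsRibbonOf r μ ν) :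
    ∃ s : ℤ, s ∈ betaSet μ ∧ s - (r:ℤ) ∉ betaSet μ ∧
      betaSet ν = insert (s - (r:ℤ)) (betaSet μ \ {s}) := by
  classical
  obtain ⟨hsub, hcard, hconn, h2x2⟩ := h
  have hle : ∀ i, ν.rowLen i ≤ μ.rowLen i := rowLen_le_of_cells_subset hsub
  set D := ((μ.cells : Set (ℕ × ℕ)) \ (ν.cells : Set (ℕ × ℕ))) with hD
  obtain ⟨N, hN⟩ := exists_rowLen_zero μ
  set RF : Finset ℕ := (Finset.range N).filter (fun i => ν.rowLen i < μ.rowLen i) with hRF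
  have hmemRF : ∀ i, i ∈ RF ↔ ν.rowLen i < μ.rowLen i := by
    intro i
    simp only [hRF, Finset.mem_filter, Finset.mem_range]
    constructor
    · rintro ⟨-, h2⟩; exact h2
    · intro h2
      refine ⟨?_, h2⟩
      by_contra hc
      have := hN i (by omega)
      omega
  have hRFne : RF.Nonempty := by
    have h1 : 0 < (μ.cells \ ν.cells).card := by omega
    obtain ⟨c, hc⟩ := Finset.card_pos.1 h1
    obtain ⟨i, j⟩ := c
    rw [mem_fdiff_iff hle] at hc
    exact ⟨i, (hmemRF i).2 (by omega)⟩
  set a := RF.min' hRFne with hadef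
  set b := RF.max' hRFne with hbdef
  have hab : a ≤ b := RF.min'_le b (RF.max'_mem hRFne)
  have haR : ν.rowLen a < μ.rowLen a := (hmemRF a).1 (RF.min'_mem hRFne)
  have hbR : ν.rowLen b < μ.rowLen b := (hmemRF b).1 (RF.max'_mem hRFne)
  have hout : ∀ i, ν.rowLen i < μ.rowLen i → a ≤ i ∧ i ≤ b := by
    intro i hi
    exact ⟨RF.min'_le i ((hmemRF i).2 hi), RF.le_max' i ((hmemRF i).2 hi)⟩
  have hpath_rows : ∀ x y : ℕ × ℕ,
      Relation.ReflTransGen (fun p q => Adj p q ∧ p ∈ D ∧ q ∈ D) x y →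
      x ∈ D → ∀ i, x.1 ≤ i → i ≤ y.1 → ∃ j, (i, j) ∈ D := by
    intro x y hxy
    induction hxy with
    | refl =>
        intro hx i h1 h2
        have h3 : i = x.1 := by omega
        subst h3
        exact ⟨x.2, by rwa [Prod.mk.eta]⟩
    | @tail z w hp hstep ih =>
        intro hx i h1 h2
        rcases le_or_gt i z.1 with h3 | h3
        · exact ih hx i h1 h3
        · obtain ⟨hadj, -, hwD⟩ := hstep
          rcases hadj with ⟨he, -⟩ | ⟨-, he | he⟩
          · omega
          · have h4 : i = w.1 := by omega
            subst h4
            exact ⟨w.2, by rwa [Prod.mk.eta]⟩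
          · omega
  have hrows_int : ∀ i, a ≤ i → i ≤ b → ν.rowLen i < μ.rowLen i := by
    intro i h1 h2
    have hxa : (a, ν.rowLen a) ∈ D := (mem_diff_iff hle _ _).2 ⟨le_rfl, haR⟩
    have hxb : (b, ν.rowLen b) ∈ D := (mem_diff_iff hle _ _).2 ⟨le_rfl, hbR⟩
    have hp := hconn _ hxa _ hxb
    obtain ⟨j, hj⟩ := hpath_rows _ _ hp hxa i h1 h2
    rw [mem_diff_iff hle] at hj
    omega
  have hstepfind : ∀ y x : ℕ × ℕ,
      Relation.ReflTransGen (fun p q => Adj p q ∧ p ∈ D ∧ q ∈ D) x y →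
      ∀ i, i < x.1 → y.1 ≤ i → ∃ j, (i, j) ∈ D ∧ (i+1, j) ∈ D := by
    intro y x hxy
    induction hxy using Relation.ReflTransGen.head_induction_on with
    | refl =>
        intro i h1 h2
        exact absurd h2 (by omega)
    | @head x' z hstep hp ih =>
        intro i h1 h2
        rcases lt_or_ge i z.1 with h3 | h3
        · exact ih i h3 h2
        · obtain ⟨hadj, hxD, hzD⟩ := hstep
          rcases hadj with ⟨he, -⟩ | ⟨he2, he | he⟩
          · omega
          · omega
          · have h4 : i = z.1 := by omega
            refine ⟨z.2, ?_, ?_⟩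
            · rw [h4, Prod.mk.eta]; exact hzD
            · have h5 : (i+1, z.2) = x' := by
                have : x'.1 = i + 1 := by omega
                rw [← this, ← he2, Prod.mk.eta]
              rw [h5]; exact hxD
  have hoverlap : ∀ i, a ≤ i → i < b → (ν.rowLen i : ℤ) = (μ.rowLen (i+1) : ℤ) - 1 := by
    intro i h1 h2
    have hx : (i+1, ν.rowLen (i+1)) ∈ D :=
      (mem_diff_iff hle _ _).2 ⟨le_rfl, hrows_int (i+1) (by omega) (by omega)⟩
    have hy : (i, ν.rowLen i) ∈ D :=
      (mem_diff_iff hle _ _).2 ⟨le_rfl, hrows_int i h1 (by omega)⟩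
    obtain ⟨j, hj1, hj2⟩ := hstepfind _ _ (hconn _ hx _ hy) i (by simp) (by simp)
    rw [mem_diff_iff hle] at hj1 hj2
    by_contra hne2
    have hν1 : ν.rowLen (i+1) ≤ ν.rowLen i := ν.rowLen_anti i (i+1) (by omega)
    have hμ1 : μ.rowLen (i+1) ≤ μ.rowLen i := μ.rowLen_anti i (i+1) (by omega)
    apply h2x2 i (ν.rowLen i)
    refine ⟨?_, ?_, ?_, ?_⟩ <;> rw [mem_fdiff_iff hle] <;> omega
  have hempty : ∀ i, i < a ∨ b < i → ν.rowLen i = μ.rowLen i := by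
    intro i hi
    have h1 := hle i
    by_contra hc
    have h2 := hout i (by omega)
    omega
  set s := beta μ a with hsdef
  -- cardinality identity gives the value of `beta ν b`
  set K' := max N (b+1) with hK'def
  have hKμ : ∀ i, K' ≤ i → μ.rowLen i = 0 := fun i hi => hN i (by omega)
  have hKν : ∀ i, K' ≤ i → ν.rowLen i = 0 := fun i hi => by
    have := hle i
    have := hN i (by omega)
    omega
  have hβb : beta ν b = s - r := by
    have hcμ := card_cells_eq_sum μ K' hKμ
    have hcν := card_cells_eq_sum ν K' hKν
    have hcards : (μ.cells.card : ℤ) - ν.cells.card = r := by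
      have h1 := Finset.card_sdiff_of_subset hsub
      have h2 := Finset.card_le_card hsub
      omega
    have hsum : ∑ i ∈ Finset.range K', ((μ.rowLen i : ℤ) - ν.rowLen i) = r := by
      rw [Finset.sum_sub_distrib]
      rw [hcμ, hcν] at hcards
      push_cast at hcards ⊢
      exact hcards
    have hstep1 : ∑ i ∈ Finset.Ico a (b+1), ((μ.rowLen i:ℤ) - ν.rowLen i)
        = ∑ i ∈ Finset.range K', ((μ.rowLen i:ℤ) - ν.rowLen i) := by
      apply Finset.sum_subset
      · intro i hi
        simp only [Finset.mem_Ico] at hi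
        simp only [Finset.mem_range]
        omega
      · intro i hi hni
        simp only [Finset.mem_Ico] at hni
        push_neg at hni
        have : ν.rowLen i = μ.rowLen i := by
          rcases Nat.lt_or_ge i a with h | h
          · exact hempty i (Or.inl h)
          · exact hempty i (Or.inr (by omega))
        omega
    rw [← hstep1, Finset.sum_Ico_succ_top (by omega)] at hsum
    have hstep2 : ∑ i ∈ Finset.Ico a b, ((μ.rowLen i:ℤ) - ν.rowLen i)
        = ∑ i ∈ Finset.Ico a b, (((μ.rowLen i:ℤ) - μ.rowLen (i+1)) + 1) := by
      apply Finset.sum_congr rfl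
      intro i hi
      simp only [Finset.mem_Ico] at hi
      have := hoverlap i hi.1 hi.2
      omega
    rw [hstep2, Finset.sum_add_distrib, telescope (fun i => (μ.rowLen i : ℤ)) a b hab] at hsum
    simp only [Finset.sum_const, Nat.card_Ico, nsmul_eq_mul, mul_one] at hsum
    simp only [beta, hsdef]
    push_cast at hsum ⊢
    omega
  have hβlt : ∀ i, i < a → beta ν i = beta μ i := by
    intro i hi
    simp only [beta, hempty i (Or.inl hi)]
  have hβgt : ∀ i, b < i → beta ν i = beta μ i := by
    intro i hi
    simp only [beta, hempty i (Or.inr hi)]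
  have hβmid : ∀ i, a ≤ i → i < b → beta ν i = beta μ (i+1) := by
    intro i h1 h2
    have h3 := hoverlap i h1 h2
    simp only [beta]
    push_cast
    omega
  have hBA := beta_strictAnti μ
  have hBA' := beta_strictAnti ν
  have hsmem : s ∈ betaSet μ := by rw [betaSet_eq_range]; exact ⟨a, rfl⟩
  have hsr : s - (r:ℤ) ∉ betaSet μ := by
    rw [betaSet_eq_range]
    rintro ⟨i, hi⟩
    have hr' : (1:ℤ) ≤ r := by exact_mod_cast hr
    have hia : a < i := by
      by_contra hc
      push_neg at hc
      have h3 := hBA.antitone hc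
      rw [← hsdef] at h3
      omega
    rcases le_or_gt i b with h3 | h3
    · have h4 : beta ν (i-1) = beta μ i := by
        rw [hβmid (i-1) (by omega) (by omega), show i-1+1 = i by omega]
      have h5 : beta ν (i-1) = beta ν b := by rw [h4, hi, ← hβb]
      have := hBA'.injective h5
      omega
    · have h4 : beta ν i = beta ν b := by rw [hβgt i h3, hi, ← hβb]
      have := hBA'.injective h4
      omega
  refine ⟨s, hsmem, hsr, ?_⟩
  rw [betaSet_eq_range, betaSet_eq_range]
  apply Set.eq_of_subset_of_subset
  · rintro x ⟨i, rfl⟩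
    simp only [Set.mem_insert_iff, Set.mem_diff, Set.mem_singleton_iff, Set.mem_range]
    by_cases h1 : i < a
    · rw [hβlt i h1]
      refine Or.inr ⟨⟨i, rfl⟩, fun he => ?_⟩
      have : i = a := hBA.injective (he.trans rfl)
      omega
    · by_cases h2 : i < b
      · rw [hβmid i (by omega) h2]
        refine Or.inr ⟨⟨i+1, rfl⟩, fun he => ?_⟩
        have : i + 1 = a := hBA.injective (he.trans rfl)
        omega
      · by_cases h3 : i = b
        · rw [h3, hβb]; exact Or.inl rfl
        · rw [hβgt i (by omega)]
          refine Or.inr ⟨⟨i, rfl⟩, fun he => ?_⟩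
          have : i = a := hBA.injective (he.trans rfl)
          omega
  · intro x hx
    simp only [Set.mem_insert_iff, Set.mem_diff, Set.mem_singleton_iff, Set.mem_range] at hx ⊢
    rcases hx with rfl | ⟨⟨i, rfl⟩, hne⟩
    · exact ⟨b, hβb⟩
    · have hia : i ≠ a := fun he => hne (by rw [he, hsdef])
      by_cases h1 : i < a
      · exact ⟨i, hβlt i h1⟩
      · by_cases h2 : i ≤ b
        · exact ⟨i - 1, by rw [hβmid (i-1) (by omega) (by omega), show i-1+1 = i by omega]⟩
        · exact ⟨i, hβgt i (by omega)⟩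

/-! ### Assembly -/

lemma Maya.move {S : Set ℤ} (h : Maya S) {s t : ℤ} (hts : t < s) :
    Maya (insert t (S \ {s})) := by
  obtain ⟨⟨b, hb⟩, M, hM⟩ := h
  refine ⟨⟨max b t, ?_⟩, ⟨min M (t - 1), ?_⟩⟩
  · rintro x (rfl | ⟨h1, -⟩)
    · exact le_max_right _ _
    · exact le_trans (hb x h1) (le_max_left _ _)
  · intro n hn
    right
    refine ⟨hM n (by omega), ?_⟩
    simp only [Set.mem_singleton_iff]
    omega

lemma Maya.shift {L : Set ℤ} (h : Maya L) (c : ℤ) : Maya {x : ℤ | x - c ∈ L} := by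
  obtain ⟨⟨b, hb⟩, M, hM⟩ := h
  refine ⟨⟨b + c, fun x hx => ?_⟩, ⟨M + c, fun n hn => ?_⟩⟩
  · have := hb _ hx
    omega
  · show n - c ∈ L
    exact hM _ (by omega)

lemma isRCore_iff_packed {r : ℕ} (hr : 1 ≤ r) (μ : YoungDiagram) :
    IsRCore r μ ↔ Packed r (betaSet μ) := by
  constructor
  · intro hcore s hs
    by_contra hsr
    obtain ⟨ν, hν⟩ := isBeta_of_maya ((maya_betaSet μ).move
      (show s - (r:ℤ) < s by have h9 : (1:ℤ) ≤ (r:ℤ) := Nat.one_le_cast.mpr hr; omega))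
      (by rw [ch_move (maya_betaSet μ) (show s - (r:ℤ) < s by
            have h9 : (1:ℤ) ≤ (r:ℤ) := Nat.one_le_cast.mpr hr; omega) hs hsr]
          exact ch_betaSet μ)
    exact hcore ν (ribbon_of_move hr hs hsr hν)
  · intro hp ν hrib
    obtain ⟨s, hs, hsr, -⟩ := move_of_ribbon hr hrib
    exact hsr (hp s hs)

lemma charges_of_ribbon {r : ℕ} (hr : 1 ≤ r) {μ ν : YoungDiagram} (h : IsRibbonOf r μ ν)
    (i : ℤ) (h0 : 0 ≤ i) (hir : i < r) :
    ch (lineSet r (betaSet ν) i) = ch (lineSet r (betaSet μ) i) := by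
  obtain ⟨s, hs, hsr, hset⟩ := move_of_ribbon hr h
  rw [hset]
  exact lineSet_move hr (maya_betaSet μ)
    (show s - (r:ℤ) < s by have h9 : (1:ℤ) ≤ (r:ℤ) := Nat.one_le_cast.mpr hr; omega)
    hs hsr ⟨1, by ring⟩ i h0 hir

lemma charges_of_chain {r : ℕ} (hr : 1 ≤ r) {μ ν : YoungDiagram}
    (h : Relation.ReflTransGen (fun a b => IsRibbonOf r a b) μ ν)
    (i : ℤ) (h0 : 0 ≤ i) (hir : i < r) :
    ch (lineSet r (betaSet ν) i) = ch (lineSet r (betaSet μ) i) := by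
  induction h with
  | refl => rfl
  | tail hp hstep ih => rw [charges_of_ribbon hr hstep i h0 hir, ih]

lemma packed_eq_of_charges {r : ℕ} (hr : 1 ≤ r) {S T : Set ℤ} (hMS : Maya S) (hMT : Maya T)
    (hpS : Packed r S) (hpT : Packed r T)
    (hch : ∀ i : ℤ, 0 ≤ i → i < r → ch (lineSet r S i) = ch (lineSet r T i)) : S = T := by
  apply lineSet_ext hr
  intro i h0 hir
  rw [hpS.lineSet_eq_Iio hr hMS i, hpT.lineSet_eq_Iio hr hMT i, hch i h0 hir]

lemma core_unique {r : ℕ} (hr : 1 ≤ r) {μ ν ν' : YoungDiagram}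
    (h1 : ReachesCore r μ ν) (h2 : ReachesCore r μ ν') : ν = ν' := by
  apply betaSet_injective
  apply packed_eq_of_charges hr (maya_betaSet ν) (maya_betaSet ν')
    ((isRCore_iff_packed hr ν).1 h1.2) ((isRCore_iff_packed hr ν').1 h2.2)
  intro i h0 hir
  rw [charges_of_chain hr h1.1 i h0 hir, ← charges_of_chain hr h2.1 i h0 hir]

/-- main induction: a diagram whose line charges agree with those of a given core
reaches that core. -/
lemma reach_core_of_charges {r : ℕ} (hr : 1 ≤ r) (c : YoungDiagram) (hcore : IsRCore r c) :
    ∀ n (μ : YoungDiagram), μ.cells.card = n →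
    (∀ i : ℤ, 0 ≤ i → i < r →
      ch (lineSet r (betaSet μ) i) = ch (lineSet r (betaSet c) i)) →
    Relation.ReflTransGen (fun a b => IsRibbonOf r a b) μ c := by
  intro n
  induction n using Nat.strong_induction_on with
  | _ n ih =>
    intro μ hn hch
    by_cases hp : Packed r (betaSet μ)
    · have heq : betaSet μ = betaSet c :=
        packed_eq_of_charges hr (maya_betaSet μ) (maya_betaSet c) hp
          ((isRCore_iff_packed hr c).1 hcore) hch
      rw [betaSet_injective heq]
    · unfold Packed at hp
      push_neg at hp
      obtain ⟨s, hs, hsr⟩ := hp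
      have hts : s - (r:ℤ) < s := by
        have h9 : (1:ℤ) ≤ (r:ℤ) := Nat.one_le_cast.mpr hr
        omega
      obtain ⟨ν, hν⟩ := isBeta_of_maya ((maya_betaSet μ).move hts)
        (by rw [ch_move (maya_betaSet μ) hts hs hsr]; exact ch_betaSet μ)
      have hrib : IsRibbonOf r μ ν := ribbon_of_move hr hs hsr hν
      have hlt : ν.cells.card < n := by
        have h1 := hrib.2.1
        have h2 := Finset.card_sdiff_of_subset hrib.1
        have h3 := Finset.card_le_card hrib.1
        omega
      have hchν : ∀ i : ℤ, 0 ≤ i → i < r →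
          ch (lineSet r (betaSet ν) i) = ch (lineSet r (betaSet c) i) := by
        intro i h0 hir
        rw [charges_of_ribbon hr hrib i h0 hir, hch i h0 hir]
      exact Relation.ReflTransGen.head hrib (ih _ hlt ν rfl hchν)

lemma core_exists {r : ℕ} (hr : 1 ≤ r) :
    ∀ n (μ : YoungDiagram), μ.cells.card = n →
    ∃ ν, Relation.ReflTransGen (fun a b => IsRibbonOf r a b) μ ν ∧ IsRCore r ν := by
  intro n
  induction n using Nat.strong_induction_on with
  | _ n ih =>
    intro μ hn
    by_cases hc : IsRCore r μ
    · exact ⟨μ, Relation.ReflTransGen.refl, hc⟩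
    · have hp : ¬ Packed r (betaSet μ) := fun hp => hc ((isRCore_iff_packed hr μ).2 hp)
      unfold Packed at hp
      push_neg at hp
      obtain ⟨s, hs, hsr⟩ := hp
      have hts : s - (r:ℤ) < s := by
        have h9 : (1:ℤ) ≤ (r:ℤ) := Nat.one_le_cast.mpr hr
        omega
      obtain ⟨ν, hν⟩ := isBeta_of_maya ((maya_betaSet μ).move hts)
        (by rw [ch_move (maya_betaSet μ) hts hs hsr]; exact ch_betaSet μ)
      have hrib : IsRibbonOf r μ ν := ribbon_of_move hr hs hsr hν
      have hlt : ν.cells.card < n := by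
        have h1 := hrib.2.1
        have h2 := Finset.card_sdiff_of_subset hrib.1
        have h3 := Finset.card_le_card hrib.1
        omega
      obtain ⟨ρ, hρ1, hρ2⟩ := ih _ hlt ν rfl
      exact ⟨ρ, Relation.ReflTransGen.head hrib hρ1, hρ2⟩

lemma quot_exists {r : ℕ} (hr : 1 ≤ r) (μ : YoungDiagram) :
    ∃ v : Fin r → YoungDiagram, QuotRel r μ v := by
  have key : ∀ i : Fin r, ∃ w : YoungDiagram,
      betaSet w = {n : ℤ | (i : ℤ) + (n + charge r (betaSet μ) i) * r ∈ betaSet μ} := by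
    intro i
    have hM := maya_betaSet μ
    have hML : Maya (lineSet r (betaSet μ) (i:ℤ)) := hM.lineSet hr _
    have hc : charge r (betaSet μ) (i:ℤ) = ch (lineSet r (betaSet μ) (i:ℤ)) :=
      charge_eq_ch_lineSet hM hr _
    have he : {n : ℤ | (i : ℤ) + (n + charge r (betaSet μ) i) * r ∈ betaSet μ}
        = {x : ℤ | x - (-(ch (lineSet r (betaSet μ) (i:ℤ)))) ∈ lineSet r (betaSet μ) (i:ℤ)} := by
      ext n
      simp only [Set.mem_setOf_eq, lineSet, sub_neg_eq_add, hc]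
    rw [he]
    exact isBeta_of_maya (hML.shift _) (by rw [ch_shift hML]; ring)
  choose v hv using key
  exact ⟨v, hv⟩

lemma quot_unique {r : ℕ} {μ : YoungDiagram} {v v' : Fin r → YoungDiagram}
    (h : QuotRel r μ v) (h' : QuotRel r μ v') : v = v' := by
  funext i
  exact betaSet_injective ((h i).trans (h' i).symm)

lemma lineSet_of_quotRel {r : ℕ} {μ : YoungDiagram} {v : Fin r → YoungDiagram}
    (h : QuotRel r μ v) (i : Fin r) :
    lineSet r (betaSet μ) (i:ℤ) =
      {k : ℤ | k - charge r (betaSet μ) (i:ℤ) ∈ betaSet (v i)} := by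
  ext k
  simp only [lineSet, Set.mem_setOf_eq, h i]
  constructor
  · intro hk
    have : (i:ℤ) + (k - charge r (betaSet μ) (i:ℤ) + charge r (betaSet μ) (i:ℤ)) * r
        = (i:ℤ) + k * r := by ring
    rwa [this]
  · intro hk
    have : (i:ℤ) + k * r
        = (i:ℤ) + (k - charge r (betaSet μ) (i:ℤ) + charge r (betaSet μ) (i:ℤ)) * r := by ring
    rwa [this]

lemma maya_of_lines {r : ℕ} (hr : 1 ≤ r) (S : Set ℤ)
    (h : ∀ j : Fin r, Maya (lineSet r S (j:ℤ))) : Maya S := by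
  classical
  have hne : Nonempty (Fin r) := ⟨⟨0, hr⟩⟩
  have hun : (Finset.univ : Finset (Fin r)).Nonempty := Finset.univ_nonempty
  choose bf hbf using fun j : Fin r => (h j).1
  choose Mf hMf using fun j : Fin r => (h j).2
  have hrz : (0:ℤ) < r := by exact_mod_cast hr
  have hmod : ∀ m : ℤ, 0 ≤ m % r ∧ m % r < r :=
    fun m => ⟨Int.emod_nonneg m (by omega), Int.emod_lt_of_pos m hrz⟩
  constructor
  · refine ⟨(r:ℤ) + (Finset.univ.sup' hun bf) * r, fun m hm => ?_⟩
    obtain ⟨h1, h2⟩ := hmod m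
    set j : Fin r := ⟨(m % r).toNat, by omega⟩ with hj
    have hcoe : (j:ℤ) = m % r := by simp [hj]; omega
    have hk : m / r ∈ lineSet r S (j:ℤ) := by
      rw [hcoe]; exact (mem_iff_lineSet hr m).1 hm
    have h3 := hbf j _ hk
    have h4 : bf j ≤ Finset.univ.sup' hun bf := Finset.le_sup' bf (Finset.mem_univ j)
    have h5 := Int.emod_add_mul_ediv m r
    have h6 : (m / r) * (r:ℤ) ≤ (Finset.univ.sup' hun bf) * r :=
      mul_le_mul_of_nonneg_right (le_trans h3 h4) (by omega)
    have h7 : (m/r)*(r:ℤ) = r * (m/r) := mul_comm _ _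
    omega
  · set MM := min (Finset.univ.inf' hun Mf) 0 with hMM
    refine ⟨MM * r, fun m hm => ?_⟩
    obtain ⟨h1, h2⟩ := hmod m
    set j : Fin r := ⟨(m % r).toNat, by omega⟩ with hj
    have hcoe : (j:ℤ) = m % r := by simp [hj]; omega
    rw [mem_iff_lineSet hr m]
    have h8 : m / r ≤ MM := by
      by_contra hc
      push_neg at hc
      have h9 : (MM + 1) * (r:ℤ) ≤ (m/r) * r :=
        mul_le_mul_of_nonneg_right (by omega) (by omega)
      have h5 := Int.emod_add_mul_ediv m r
      have h7 : (m/r)*(r:ℤ) = r * (m/r) := mul_comm _ _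
      have h11 : (MM+1)*(r:ℤ) = MM*r + r := by ring
      omega
    have h12 : MM ≤ Mf j := le_trans (min_le_left _ _) (Finset.inf'_le Mf (Finset.mem_univ j))
    have h13 := hMf j (m / r) (by omega)
    rwa [hcoe] at h13

lemma part2_exists {r : ℕ} (hr : 1 ≤ r) (c : YoungDiagram) (hcore : IsRCore r c)
    (v : Fin r → YoungDiagram) : ∃ μ, ReachesCore r μ c ∧ QuotRel r μ v := by
  classical
  have hrz : (0:ℤ) < r := by exact_mod_cast hr
  set γ : ℤ → ℤ := fun i => ch (lineSet r (betaSet c) i) with hγ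
  set vSet : ℤ → Set ℤ := fun i =>
    if h : 0 ≤ i ∧ i < (r:ℤ) then betaSet (v ⟨i.toNat, by omega⟩) else ∅ with hvSet
  have hvSetj : ∀ j : Fin r, vSet (j:ℤ) = betaSet (v j) := by
    intro j
    have hcond : 0 ≤ (j:ℤ) ∧ (j:ℤ) < (r:ℤ) := ⟨by positivity, by exact_mod_cast j.2⟩
    simp only [hvSet, dif_pos hcond]
    congr 1
  set S : Set ℤ := {m : ℤ | m / r - γ (m % r) ∈ vSet (m % r)} with hS
  have hline : ∀ j : Fin r, lineSet r S (j:ℤ) = {k : ℤ | k - γ (j:ℤ) ∈ betaSet (v j)} := by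
    intro j
    have h0 : (0:ℤ) ≤ (j:ℤ) := by positivity
    have hjr : ((j:ℤ)) < (r:ℤ) := by exact_mod_cast j.2
    ext k
    simp only [lineSet, hS, Set.mem_setOf_eq]
    have hmod : ((j:ℤ) + k * r) % r = (j:ℤ) := by
      rw [Int.add_mul_emod_self_right]; exact Int.emod_eq_of_lt h0 hjr
    have hdiv : ((j:ℤ) + k * r) / r = k := by
      rw [Int.add_mul_ediv_right _ _ (by omega : (r:ℤ) ≠ 0),
        Int.ediv_eq_zero_of_lt h0 hjr]
      ring
    rw [hmod, hdiv, hvSetj j]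
  have hMS : Maya S := by
    apply maya_of_lines hr
    intro j
    rw [hline j]
    exact (maya_betaSet (v j)).shift _
  have hchline : ∀ j : Fin r, ch (lineSet r S (j:ℤ)) = γ (j:ℤ) := by
    intro j
    rw [hline j, ch_shift (maya_betaSet (v j)), ch_betaSet]
    ring
  have hchS : ch S = 0 := by
    rw [ch_sum hr hMS]
    have hs1 : ∀ i ∈ Finset.range r, ch (lineSet r S (i:ℤ)) = γ (i:ℤ) := by
      intro i hi
      have hir := Finset.mem_range.1 hi
      have := hchline ⟨i, hir⟩
      simpa using this
    rw [Finset.sum_congr rfl hs1]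
    have hs2 : ∑ i ∈ Finset.range r, γ (i:ℤ) = ch (betaSet c) :=
      (ch_sum hr (maya_betaSet c)).symm
    rw [hs2, ch_betaSet]
  obtain ⟨μ, hμ⟩ := isBeta_of_maya hMS hchS
  have hchμ : ∀ j : Fin r, charge r (betaSet μ) (j:ℤ) = γ (j:ℤ) := by
    intro j
    rw [charge_eq_ch_lineSet (maya_betaSet μ) hr, hμ, hchline j]
  have hquot : QuotRel r μ v := by
    intro j
    ext n
    simp only [Set.mem_setOf_eq]
    rw [hchμ j, hμ]
    constructor
    · intro hn
      show (n + γ (j:ℤ)) ∈ lineSet r S (j:ℤ)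
      rw [hline j]
      simp only [Set.mem_setOf_eq, add_sub_cancel_right]
      exact hn
    · intro hn
      have h5 : (n + γ (j:ℤ)) ∈ lineSet r S (j:ℤ) := hn
      rw [hline j] at h5
      simpa using h5
  refine ⟨μ, ⟨?_, hcore⟩, hquot⟩
  apply reach_core_of_charges hr c hcore μ.cells.card μ rfl
  intro i h0 hir
  set j : Fin r := ⟨i.toNat, by omega⟩ with hj
  have hcoe : (j:ℤ) = i := by simp [hj]; omega
  rw [← hcoe]
  have h1 := hchμ j
  rw [charge_eq_ch_lineSet (maya_betaSet μ) hr] at h1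
  rw [h1]

lemma part2_unique {r : ℕ} (hr : 1 ≤ r) {c : YoungDiagram} {v : Fin r → YoungDiagram}
    {μ μ' : YoungDiagram} (h1 : ReachesCore r μ c ∧ QuotRel r μ v)
    (h2 : ReachesCore r μ' c ∧ QuotRel r μ' v) : μ = μ' := by
  apply betaSet_injective
  apply lineSet_ext hr
  intro i h0 hir
  set j : Fin r := ⟨i.toNat, by omega⟩ with hj
  have hcoe : (j:ℤ) = i := by simp [hj]; omega
  rw [← hcoe, lineSet_of_quotRel h1.2 j, lineSet_of_quotRel h2.2 j]
  have hc1 : charge r (betaSet μ) (j:ℤ) = ch (lineSet r (betaSet c) (j:ℤ)) := by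
    rw [charge_eq_ch_lineSet (maya_betaSet μ) hr,
      ← charges_of_chain hr h1.1.1 (j:ℤ) (by positivity) (by exact_mod_cast j.2)]
  have hc2 : charge r (betaSet μ') (j:ℤ) = ch (lineSet r (betaSet c) (j:ℤ)) := by
    rw [charge_eq_ch_lineSet (maya_betaSet μ') hr,
      ← charges_of_chain hr h2.1.1 (j:ℤ) (by positivity) (by exact_mod_cast j.2)]
  rw [hc1, hc2]

end CQ

/-- The core-quotient decomposition `λ ↦ (core_r(λ), quot_r(λ))` is a bijection
between partitions and pairs of an `r`-core and an `r`-tuple of partitions. -/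
theorem core_quotient_bijection (r : ℕ) (hr : 2 ≤ r) :
    (∀ μ : YoungDiagram,
        ∃! p : YoungDiagram × (Fin r → YoungDiagram),
          ReachesCore r μ p.1 ∧ QuotRel r μ p.2) ∧
    (∀ c : YoungDiagram, IsRCore r c → ∀ v : Fin r → YoungDiagram,
        ∃! μ : YoungDiagram, ReachesCore r μ c ∧ QuotRel r μ v) := by
  have hr1 : 1 ≤ r := by omega
  constructor
  · intro μ
    obtain ⟨ν, hchain, hcore⟩ := CQ.core_exists hr1 μ.cells.card μ rfl
    obtain ⟨v, hv⟩ := CQ.quot_exists hr1 μ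
    refine ⟨(ν, v), ⟨⟨hchain, hcore⟩, hv⟩, ?_⟩
    rintro ⟨ν', v'⟩ ⟨hrc', hv'⟩
    have h1 : ν' = ν := CQ.core_unique hr1 hrc' ⟨hchain, hcore⟩
    have h2 : v' = v := CQ.quot_unique hv' hv
    rw [Prod.mk.injEq]
    exact ⟨h1, h2⟩
  · intro c hcore v
    obtain ⟨μ, hμ⟩ := CQ.part2_exists hr1 c hcore v
    refine ⟨μ, hμ, ?_⟩
    intro μ' hμ'
    exact CQ.part2_unique hr1 hμ' hμ
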